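/- In the Hopf algebra G(A,B) with B^t A^t B A = λ I_n, the square of the antipode satisfies S^2(u) = B A^t u (A^t)^{-1} B^{-1} (entrywise matrix equation) and S^2(D^{±1}) = D^{±1}. -/

import Mathlib

open Matrix

/-- Generators of the algebra `G(A,B)`: the `u i j`, `𝔻`, and `𝔻⁻¹`. -/
inductive GABgen (n : ℕ) : Type
  | u : Fin n → Fin n → GABgen n
  | D : GABgen n
  | Dinv : GABgen n

/-- The matrix of generators `u` inside the free algebra. -/
noncomputable def GABu (k : Type*) [Field k] (n : ℕ) :
    Matrix (Fin n) (Fin n) (FreeAlgebra k (GABgen n)) :=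
  fun i j => FreeAlgebra.ι k (GABgen.u i j)

/-- The defining relations of `G(A,B)`: `uᵀ A u = A 𝔻`, `u B uᵀ = B 𝔻`,
`𝔻 𝔻⁻¹ = 1 = 𝔻⁻¹ 𝔻`. -/
inductive GABrel (k : Type*) [Field k] {n : ℕ} (A B : Matrix (Fin n) (Fin n) k) :
    FreeAlgebra k (GABgen n) → FreeAlgebra k (GABgen n) → Prop
  | relA (i j : Fin n) : GABrel k A B
      ((((GABu k n)ᵀ * A.map (algebraMap k (FreeAlgebra k (GABgen n))) * GABu k n)) i j)
      (algebraMap k (FreeAlgebra k (GABgen n)) (A i j) * FreeAlgebra.ι k GABgen.D)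
  | relB (i j : Fin n) : GABrel k A B
      (((GABu k n * B.map (algebraMap k (FreeAlgebra k (GABgen n))) * (GABu k n)ᵀ)) i j)
      (algebraMap k (FreeAlgebra k (GABgen n)) (B i j) * FreeAlgebra.ι k GABgen.D)
  | relD : GABrel k A B (FreeAlgebra.ι k GABgen.D * FreeAlgebra.ι k GABgen.Dinv) 1
  | relD' : GABrel k A B (FreeAlgebra.ι k GABgen.Dinv * FreeAlgebra.ι k GABgen.D) 1

/-- The algebra `G(A,B)`, presented by generators `u i j`, `𝔻`, `𝔻⁻¹` and the relations above. -/
noncomputable def GAB (k : Type*) [Field k] {n : ℕ} (A B : Matrix (Fin n) (Fin n) k) : Type _ :=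
  RingQuot (GABrel k A B)

noncomputable instance (k : Type*) [Field k] {n : ℕ} (A B : Matrix (Fin n) (Fin n) k) :
    Ring (GAB k A B) := by unfold GAB; infer_instance

noncomputable instance (k : Type*) [Field k] {n : ℕ} (A B : Matrix (Fin n) (Fin n) k) :
    Algebra k (GAB k A B) := by unfold GAB; infer_instance

/-- The generators `u i j` of `G(A,B)`. -/
noncomputable def GABU (k : Type*) [Field k] {n : ℕ} (A B : Matrix (Fin n) (Fin n) k)
    (i j : Fin n) : GAB k A B :=
  RingQuot.mkAlgHom k (GABrel k A B) (FreeAlgebra.ι k (GABgen.u i j))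

/-- The generator `𝔻` of `G(A,B)`. -/
noncomputable def GABD (k : Type*) [Field k] {n : ℕ} (A B : Matrix (Fin n) (Fin n) k) :
    GAB k A B :=
  RingQuot.mkAlgHom k (GABrel k A B) (FreeAlgebra.ι k GABgen.D)

/-- The generator `𝔻⁻¹` of `G(A,B)`. -/
noncomputable def GABDinv (k : Type*) [Field k] {n : ℕ} (A B : Matrix (Fin n) (Fin n) k) :
    GAB k A B :=
  RingQuot.mkAlgHom k (GABrel k A B) (FreeAlgebra.ι k GABgen.Dinv)

open scoped TensorProduct

/-- The matrix of generators of `G(A,B)` regarded as elements of `G(A,B)`. -/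
noncomputable def GABumat (k : Type*) [Field k] {n : ℕ} (A B : Matrix (Fin n) (Fin n) k) :
    Matrix (Fin n) (Fin n) (GAB k A B) := fun i j => GABU k A B i j

/-- If `Bᵀ Aᵀ B A = λ Iₙ` then the antipode `S` of `G(A,B)` (the algebra anti-endomorphism with
`S(u) = 𝔻⁻¹ A⁻¹ uᵀ A` and `S(𝔻^{±1}) = 𝔻^{∓1}`) satisfies
`S²(u) = B Aᵀ u (Aᵀ)⁻¹ B⁻¹` (entrywise) and `S²(𝔻^{±1}) = 𝔻^{±1}`. -/
theorem stmt4 {k : Type*} [Field k] {n : ℕ} (hn : 2 ≤ n)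
    (A B : Matrix (Fin n) (Fin n) k) (hA : IsUnit A) (hB : IsUnit B)
    (lam : k) (hlam : lam ≠ 0)
    (hrel : Bᵀ * Aᵀ * B * A = lam • (1 : Matrix (Fin n) (Fin n) k))
    (S : GAB k A B → GAB k A B)
    (hadd : ∀ x y, S (x + y) = S x + S y)
    (hmul : ∀ x y, S (x * y) = S y * S x)
    (hone : S 1 = 1)
    (hsc : ∀ c : k, S (algebraMap k (GAB k A B) c) = algebraMap k (GAB k A B) c)
    (hu : ∀ i j, S (GABU k A B i j) =
      GABDinv k A B *
        ((A⁻¹.map (algebraMap k (GAB k A B)) * (GABumat k A B)ᵀ *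
            A.map (algebraMap k (GAB k A B))) i j))
    (hD : S (GABD k A B) = GABDinv k A B)
    (hDinv : S (GABDinv k A B) = GABD k A B) :
    (∀ i j, S (S (GABU k A B i j)) =
      (((B * Aᵀ).map (algebraMap k (GAB k A B))) * GABumat k A B *
        (((Aᵀ)⁻¹ * B⁻¹).map (algebraMap k (GAB k A B)))) i j) ∧
    S (S (GABD k A B)) = GABD k A B ∧
    S (S (GABDinv k A B)) = GABDinv k A B := by
  classical
  refine ⟨?_, by rw [hD, hDinv], by rw [hDinv, hD]⟩
  have hS0 : S 0 = 0 := by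
    have h := hadd 0 0
    rw [add_zero] at h
    exact (left_eq_add.mp h)
  set φ : k →+* GAB k A B := (algebraMap k (GAB k A B)) with hφ
  set F := RingQuot.mkAlgHom k (GABrel k A B) with hF
  set Uu : Matrix (Fin n) (Fin n) (GAB k A B) := GABumat k A B with hUu
  set Dd : GAB k A B := GABD k A B with hDd
  set Di : GAB k A B := GABDinv k A B with hDi
  have hAdet : IsUnit A.det := (Matrix.isUnit_iff_isUnit_det A).mp hA
  have hBdet : IsUnit B.det := (Matrix.isUnit_iff_isUnit_det B).mp hB
  -- the additive hom version of S
  let Sh : GAB k A B →+ GAB k A B := { toFun := S, map_zero' := hS0, map_add' := hadd }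
  -- entrywise transposed S on matrices, an anti-homomorphism
  set Sm : Matrix (Fin n) (Fin n) (GAB k A B) → Matrix (Fin n) (Fin n) (GAB k A B) :=
    (fun M => Matrix.of fun i j => S (M j i)) with hSm
  have Sm_apply : ∀ (M : Matrix (Fin n) (Fin n) (GAB k A B)) i j, Sm M i j = S (M j i) := by
    intro M i j; rfl
  have Sm_mul : ∀ M N : Matrix (Fin n) (Fin n) (GAB k A B), Sm (M * N) = Sm N * Sm M := by
    intro M N
    ext i j
    rw [Sm_apply, Matrix.mul_apply, Matrix.mul_apply]
    calc S (∑ p, M j p * N p i) = ∑ p, S (M j p * N p i) := map_sum Sh _ _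
      _ = ∑ p, Sm N i p * Sm M p j := by
          refine Finset.sum_congr rfl fun p _ => ?_
          rw [Sm_apply, Sm_apply]; exact hmul _ _
  -- the key quotient relations, in matrix form
  have hFU : (AlgHom.mapMatrix (m := Fin n) F) (GABu k n) = Uu := by
    ext i j; rfl
  have hFA : ∀ C : Matrix (Fin n) (Fin n) k,
      (AlgHom.mapMatrix (m := Fin n) F) (C.map (algebraMap k (FreeAlgebra k (GABgen n))))
        = C.map φ := by
    intro C; ext i j
    exact F.commutes (C i j)
  have hFUt : (AlgHom.mapMatrix (m := Fin n) F) ((GABu k n)ᵀ) = Uuᵀ := by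
    ext a b; rfl
  have relAmat : Uuᵀ * A.map φ * Uu = A.map φ * Matrix.diagonal (fun _ => Dd) := by
    ext i j
    have h := RingQuot.mkAlgHom_rel k (GABrel.relA (k := k) (A := A) (B := B) i j)
    have hL : (AlgHom.mapMatrix (m := Fin n) F)
        ((GABu k n)ᵀ * A.map (algebraMap k (FreeAlgebra k (GABgen n))) * GABu k n)
        = Uuᵀ * A.map φ * Uu := by
      rw [_root_.map_mul, _root_.map_mul, hFA, hFU, hFUt]
      rfl
    erw [Matrix.mul_diagonal]
    rw [← hL, AlgHom.mapMatrix_apply, Matrix.map_apply, h,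
      _root_.map_mul]
    congr 1
    · exact (F.commutes (A i j))
  have relBmat : Uu * B.map φ * Uuᵀ = B.map φ * Matrix.diagonal (fun _ => Dd) := by
    ext i j
    have h := RingQuot.mkAlgHom_rel k (GABrel.relB (k := k) (A := A) (B := B) i j)
    have hL : (AlgHom.mapMatrix (m := Fin n) F)
        (GABu k n * B.map (algebraMap k (FreeAlgebra k (GABgen n))) * (GABu k n)ᵀ)
        = Uu * B.map φ * Uuᵀ := by
      rw [_root_.map_mul, _root_.map_mul, hFA, hFU, hFUt]
      rfl
    erw [Matrix.mul_diagonal]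
    rw [← hL, AlgHom.mapMatrix_apply, Matrix.map_apply, h,
      _root_.map_mul]
    congr 1
    · exact (F.commutes (B i j))
  have hDDi : Dd * Di = 1 := by
    have h := RingQuot.mkAlgHom_rel k (GABrel.relD (k := k) (A := A) (B := B))
    rw [_root_.map_mul, _root_.map_one] at h
    exact h
  have hDiD : Di * Dd = 1 := by
    have h := RingQuot.mkAlgHom_rel k (GABrel.relD' (k := k) (A := A) (B := B))
    rw [_root_.map_mul, _root_.map_one] at h
    exact h
  -- maps of invertible scalar matrices
  have hmapmul : ∀ C C' : Matrix (Fin n) (Fin n) k, (C * C').map φ = C.map φ * C'.map φ :=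
    fun C C' => Matrix.map_mul
  have hmap1 : (1 : Matrix (Fin n) (Fin n) k).map φ = 1 :=
    Matrix.map_one φ (map_zero φ) (map_one φ)
  have hAiA : A⁻¹.map φ * A.map φ = 1 := by
    rw [← hmapmul, Matrix.nonsing_inv_mul A hAdet, hmap1]
  have hBBi : B.map φ * B⁻¹.map φ = 1 := by
    rw [← hmapmul, Matrix.mul_nonsing_inv B hBdet, hmap1]
  -- the matrices V and W
  set X : Matrix (Fin n) (Fin n) (GAB k A B) := A⁻¹.map φ * Uuᵀ * A.map φ with hX
  set V : Matrix (Fin n) (Fin n) (GAB k A B) := Matrix.diagonal (fun _ => Di) * X with hV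
  set W : Matrix (Fin n) (Fin n) (GAB k A B) :=
    B.map φ * Uuᵀ * Matrix.diagonal (fun _ => Di) * B⁻¹.map φ with hW
  have hVU : V * Uu = 1 := by
    calc V * Uu = Matrix.diagonal (fun _ => Di) * (A⁻¹.map φ * (Uuᵀ * A.map φ * Uu)) := by
          rw [hV, hX]; noncomm_ring
      _ = Matrix.diagonal (fun _ => Di) * (A⁻¹.map φ * A.map φ * Matrix.diagonal (fun _ => Dd))
          := by rw [relAmat]; noncomm_ring
      _ = Matrix.diagonal (fun _ => Di) * Matrix.diagonal (fun _ => Dd) := by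
          rw [hAiA, one_mul]
      _ = 1 := by erw [Matrix.diagonal_mul_diagonal]; simp [hDiD]
  have hUW : Uu * W = 1 := by
    calc Uu * W = (Uu * B.map φ * Uuᵀ) * (Matrix.diagonal (fun _ => Di) * B⁻¹.map φ) := by
          rw [hW]; noncomm_ring
      _ = B.map φ * (Matrix.diagonal (fun _ => Dd) * Matrix.diagonal (fun _ => Di)) * B⁻¹.map φ
          := by rw [relBmat]; noncomm_ring
      _ = 1 := by
          erw [Matrix.diagonal_mul_diagonal]
          simp only [hDDi, Matrix.diagonal_one, mul_one]
          exact hBBi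
  have hVW : V = W := by
    calc V = V * (Uu * W) := by rw [hUW, mul_one]
      _ = (V * Uu) * W := (mul_assoc V Uu W).symm
      _ = W := by rw [hVU, one_mul]
  -- behaviour of Sm on the pieces
  have Sm_scalar : ∀ C : Matrix (Fin n) (Fin n) k, Sm (C.map φ) = Cᵀ.map φ := by
    intro C; ext i j
    rw [Sm_apply]
    exact hsc _
  have Sm_diag : Sm (Matrix.diagonal (fun _ => Di)) = Matrix.diagonal (fun _ => Dd) := by
    ext i j
    rw [Sm_apply]
    rcases eq_or_ne i j with h | h
    · subst h; simp only [Matrix.diagonal_apply_eq]; exact hDinv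
    · rw [Matrix.diagonal_apply_ne' _ h, Matrix.diagonal_apply_ne _ h]
      exact hS0
  have Sm_Ut : Sm Uuᵀ = V := by
    ext i j
    rw [Sm_apply, Matrix.transpose_apply, hV]
    erw [Matrix.diagonal_mul]
    exact hu i j
  -- compute Sm W
  have hSW : Sm W = (B⁻¹)ᵀ.map φ * X * Bᵀ.map φ := by
    calc Sm W = Sm (B⁻¹.map φ) * Sm (B.map φ * Uuᵀ * Matrix.diagonal (fun _ => Di)) := by
          rw [hW, Sm_mul]
      _ = Sm (B⁻¹.map φ) * (Sm (Matrix.diagonal (fun _ => Di)) * (Sm Uuᵀ * Sm (B.map φ))) := by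
          rw [Sm_mul, Sm_mul]
      _ = (B⁻¹)ᵀ.map φ * (Matrix.diagonal (fun _ => Dd) * (V * Bᵀ.map φ)) := by
          rw [Sm_scalar, Sm_scalar, Sm_diag, Sm_Ut]
      _ = (B⁻¹)ᵀ.map φ *
          ((Matrix.diagonal (fun _ => Dd) * Matrix.diagonal (fun _ => Di)) * (X * Bᵀ.map φ)) := by
          rw [hV]; noncomm_ring
      _ = (B⁻¹)ᵀ.map φ * X * Bᵀ.map φ := by
          erw [Matrix.diagonal_mul_diagonal]
          simp only [hDDi, Matrix.diagonal_one, one_mul]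
          noncomm_ring
  -- transpose lemmas for scalar matrices over the noncommutative ring
  have Tleft : ∀ (C : Matrix (Fin n) (Fin n) k) (M : Matrix (Fin n) (Fin n) (GAB k A B)),
      (C.map φ * M)ᵀ = Mᵀ * Cᵀ.map φ := by
    intro C M; ext i j
    rw [Matrix.transpose_apply, Matrix.mul_apply, Matrix.mul_apply]
    refine Finset.sum_congr rfl fun p _ => ?_
    rw [Matrix.map_apply, Matrix.map_apply, Matrix.transpose_apply, Matrix.transpose_apply]
    exact Algebra.commutes (C j p) (M p i)
  have Tright : ∀ (M : Matrix (Fin n) (Fin n) (GAB k A B)) (C : Matrix (Fin n) (Fin n) k),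
      (M * C.map φ)ᵀ = Cᵀ.map φ * Mᵀ := by
    intro M C; ext i j
    rw [Matrix.transpose_apply, Matrix.mul_apply, Matrix.mul_apply]
    refine Finset.sum_congr rfl fun p _ => ?_
    rw [Matrix.map_apply, Matrix.map_apply, Matrix.transpose_apply, Matrix.transpose_apply]
    exact (Algebra.commutes (C p i) (M j p)).symm
  -- the target matrix and its transpose
  set T : Matrix (Fin n) (Fin n) (GAB k A B) :=
    (B * Aᵀ).map φ * Uu * ((Aᵀ)⁻¹ * B⁻¹).map φ with hT
  have hTt : Tᵀ = (B⁻¹)ᵀ.map φ * X * Bᵀ.map φ := by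
    rw [hT, Tright, Tleft]
    rw [Matrix.transpose_mul, Matrix.transpose_mul, Matrix.transpose_transpose,
      ← Matrix.transpose_nonsing_inv, Matrix.transpose_transpose]
    rw [hmapmul, hmapmul, hX]
    noncomm_ring
  -- conclude
  intro i j
  rw [hu i j]
  have e1 : Di * ((A⁻¹.map φ * Uuᵀ * A.map φ) i j) = V i j := by
    rw [hV]
    erw [Matrix.diagonal_mul]
  rw [show Di * ((A⁻¹.map (⇑φ) * Uuᵀ * A.map (⇑φ)) i j) = V i j from e1]
  have e2 : S (V i j) = Sm V j i := rfl
  rw [e2, hVW, hSW, ← hTt]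
  rfl
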